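/- Let O₁, …, Oₙ (n ≥ 4) be i.i.d. random elements of a measurable space T with law ν, and let h : T × T → ℝ be measurable with ∫∫ h(o₁, o₂)² dν(o₁) dν(o₂) < ∞. Define U := (1/(n(n−1))) Σ_{1 ≤ i ≠ j ≤ n} h(Oᵢ, Oⱼ). Then Var[U] = (1/(n(n−1))) E[h(O₁,O₂)² + h(O₁,O₂) h(O₂,O₁)] + ((n−2)/(n(n−1))) E[h(O₁,O₂) h(O₁,O₃) + h(O₁,O₂) h(O₃,O₁) + h(O₁,O₂) h(O₂,O₃) + h(O₁,O₂) h(O₃,O₂)] + ( (n−2)(n−3)/(n(n−1)) − 1 ) (E[h(O₁,O₂)])². -/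

import Mathlib

open MeasureTheory ProbabilityTheory

namespace UStatVarAux

/-! ### Combinatorial helpers -/

variable {N : ℕ}

/-- off-diagonal indicator -/
def W (a b : Fin N) : ℝ := if a = b then 0 else 1
/-- diagonal indicator -/
def D (a b : Fin N) : ℝ := if a = b then 1 else 0

lemma W_comm (a b : Fin N) : W a b = W b a := by simp [W, eq_comm]

lemma sum_ite_zero (a : Fin N) (r : ℝ) :
    ∑ b : Fin N, (if a = b then 0 else r) = ((N : ℝ) - 1) * r := by
  have h : ∀ b : Fin N, (if a = b then (0:ℝ) else r) = r - (if a = b then r else 0) := by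
    intro b; by_cases hb : a = b <;> simp [hb]
  rw [Finset.sum_congr rfl fun b _ => h b, Finset.sum_sub_distrib, Finset.sum_const,
    Finset.sum_ite_eq, Finset.card_univ, Fintype.card_fin]
  simp [nsmul_eq_mul]
  ring

lemma sumW_mul (a : Fin N) (r : ℝ) : ∑ b : Fin N, W a b * r = ((N : ℝ) - 1) * r := by
  have h : ∀ b : Fin N, W a b * r = if a = b then 0 else r := by
    intro b; by_cases hb : a = b <;> simp [W, hb]
  rw [Finset.sum_congr rfl fun b _ => h b, sum_ite_zero]

lemma Lb (k a : Fin N) (r : ℝ) : ∑ l : Fin N, W k l * (r * D a l) = r * W k a := by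
  have h : ∀ l : Fin N, W k l * (r * D a l) = if a = l then r * W k l else 0 := by
    intro l; by_cases hal : a = l <;> simp [D, hal] <;> ring
  rw [Finset.sum_congr rfl fun l _ => h l]
  simp

lemma Lc (k a : Fin N) (r c : ℝ) :
    ∑ l : Fin N, W k l * (r * (c * D a l)) = r * (c * W k a) := by
  have h : ∀ l : Fin N, W k l * (r * (c * D a l)) = if a = l then r * (c * W k l) else 0 := by
    intro l; by_cases hal : a = l <;> simp [D, hal] <;> ring
  rw [Finset.sum_congr rfl fun l _ => h l]
  simp

lemma Ld (k a : Fin N) (r c : ℝ) :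
    ∑ l : Fin N, W k l * (r * (D a l * c)) = r * (W k a * c) := by
  have h : ∀ l : Fin N, W k l * (r * (D a l * c)) = if a = l then r * (W k l * c) else 0 := by
    intro l; by_cases hal : a = l <;> simp [D, hal] <;> ring
  rw [Finset.sum_congr rfl fun l _ => h l]
  simp

lemma Ka (a : Fin N) (r c : ℝ) : ∑ k : Fin N, r * (c * D a k) = r * c := by
  have h : ∀ k : Fin N, r * (c * D a k) = if a = k then r * c else 0 := by
    intro k; by_cases hak : a = k <;> simp [D, hak]
  rw [Finset.sum_congr rfl fun k _ => h k]
  simp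

lemma Kb (a : Fin N) (r : ℝ) : ∑ k : Fin N, r * W k a = ((N : ℝ) - 1) * r := by
  have h : ∀ k : Fin N, r * W k a = W a k * r := by
    intro k; rw [W_comm]; ring
  rw [Finset.sum_congr rfl fun k _ => h k, sumW_mul]

lemma Kc (a b : Fin N) (r : ℝ) : ∑ k : Fin N, r * (D a k * W k b) = r * W a b := by
  have h : ∀ k : Fin N, r * (D a k * W k b) = if a = k then r * W k b else 0 := by
    intro k; by_cases hak : a = k <;> simp [D, hak]
  rw [Finset.sum_congr rfl fun k _ => h k]
  simp

lemma Kd (a b : Fin N) (r : ℝ) : ∑ k : Fin N, r * (W k a * D b k) = r * W b a := by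
  have h : ∀ k : Fin N, r * (W k a * D b k) = if b = k then r * W k a else 0 := by
    intro k; by_cases hbk : b = k <;> simp [D, hbk] <;> ring
  rw [Finset.sum_congr rfl fun k _ => h k]
  simp

theorem quad_eval (e0 e1 e2 e3 e4 e5 e6 : ℝ) :
    ∑ i : Fin N, ∑ j : Fin N, ∑ k : Fin N, ∑ l : Fin N,
      W i j * (W k l * (e0 + e1 * D i k + e2 * D i l + e3 * D j k + e4 * D j l
        + e5 * (D i k * D j l) + e6 * (D i l * D j k)))
    = (N : ℝ) * (((N : ℝ) - 1) *
        ((N : ℝ) * (((N : ℝ) - 1) * e0) + ((N : ℝ) - 1) * e1 + ((N : ℝ) - 1) * e2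
          + ((N : ℝ) - 1) * e3 + ((N : ℝ) - 1) * e4 + e5 + e6)) := by
  have hl : ∀ i j k : Fin N,
      ∑ l : Fin N, W k l * (e0 + e1 * D i k + e2 * D i l + e3 * D j k + e4 * D j l
        + e5 * (D i k * D j l) + e6 * (D i l * D j k))
      = ((N : ℝ) - 1) * e0 + ((N : ℝ) - 1) * (e1 * D i k) + e2 * W k i
        + ((N : ℝ) - 1) * (e3 * D j k) + e4 * W k j + e5 * (D i k * W k j)
        + e6 * (W k i * D j k) := by
    intro i j k
    simp only [mul_add, Finset.sum_add_distrib]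
    rw [sumW_mul, sumW_mul, Lb, sumW_mul, Lb, Lc, Ld]
  have hk : ∀ i j : Fin N,
      ∑ k : Fin N, (((N : ℝ) - 1) * e0 + ((N : ℝ) - 1) * (e1 * D i k) + e2 * W k i
        + ((N : ℝ) - 1) * (e3 * D j k) + e4 * W k j + e5 * (D i k * W k j)
        + e6 * (W k i * D j k))
      = (N : ℝ) * (((N : ℝ) - 1) * e0) + ((N : ℝ) - 1) * e1 + ((N : ℝ) - 1) * e2
        + ((N : ℝ) - 1) * e3 + ((N : ℝ) - 1) * e4 + e5 * W i j + e6 * W j i := by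
    intro i j
    simp only [Finset.sum_add_distrib]
    rw [Finset.sum_const, Ka, Kb, Ka, Kb, Kc, Kd, Finset.card_univ, Fintype.card_fin,
      nsmul_eq_mul]
  have hj : ∀ i : Fin N,
      ∑ j : Fin N, W i j * ((N : ℝ) * (((N : ℝ) - 1) * e0) + ((N : ℝ) - 1) * e1
        + ((N : ℝ) - 1) * e2 + ((N : ℝ) - 1) * e3 + ((N : ℝ) - 1) * e4
        + e5 * W i j + e6 * W j i)
      = ((N : ℝ) - 1) * ((N : ℝ) * (((N : ℝ) - 1) * e0) + ((N : ℝ) - 1) * e1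
        + ((N : ℝ) - 1) * e2 + ((N : ℝ) - 1) * e3 + ((N : ℝ) - 1) * e4 + e5 + e6) := by
    intro i
    have h : ∀ j : Fin N, W i j * ((N : ℝ) * (((N : ℝ) - 1) * e0) + ((N : ℝ) - 1) * e1
        + ((N : ℝ) - 1) * e2 + ((N : ℝ) - 1) * e3 + ((N : ℝ) - 1) * e4
        + e5 * W i j + e6 * W j i)
        = W i j * ((N : ℝ) * (((N : ℝ) - 1) * e0) + ((N : ℝ) - 1) * e1
          + ((N : ℝ) - 1) * e2 + ((N : ℝ) - 1) * e3 + ((N : ℝ) - 1) * e4 + e5 + e6) := by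
      intro j
      by_cases hij : i = j
      · simp [W, hij]
      · simp only [W, if_neg hij, if_neg (fun hji : j = i => hij hji.symm)]
        ring
    rw [Finset.sum_congr rfl fun j _ => h j, sumW_mul]
  calc ∑ i : Fin N, ∑ j : Fin N, ∑ k : Fin N, ∑ l : Fin N,
      W i j * (W k l * (e0 + e1 * D i k + e2 * D i l + e3 * D j k + e4 * D j l
        + e5 * (D i k * D j l) + e6 * (D i l * D j k)))
      = ∑ i : Fin N, ∑ j : Fin N, W i j * ((N : ℝ) * (((N : ℝ) - 1) * e0)
          + ((N : ℝ) - 1) * e1 + ((N : ℝ) - 1) * e2 + ((N : ℝ) - 1) * e3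
          + ((N : ℝ) - 1) * e4 + e5 * W i j + e6 * W j i) := by
        refine Finset.sum_congr rfl fun i _ => Finset.sum_congr rfl fun j _ => ?_
        rw [Finset.sum_congr rfl fun k _ => (Finset.mul_sum _ _ _).symm, ← Finset.mul_sum,
          Finset.sum_congr rfl fun k _ => hl i j k, hk i j]
    _ = (N : ℝ) * (((N : ℝ) - 1) *
        ((N : ℝ) * (((N : ℝ) - 1) * e0) + ((N : ℝ) - 1) * e1 + ((N : ℝ) - 1) * e2
          + ((N : ℝ) - 1) * e3 + ((N : ℝ) - 1) * e4 + e5 + e6)) := by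
        rw [Finset.sum_congr rfl fun i _ => hj i, Finset.sum_const, Finset.card_univ,
          Fintype.card_fin, nsmul_eq_mul]

/-! ### Measure-theoretic helpers -/

theorem L2mul {α : Type*} [MeasurableSpace α] {μ : Measure α} {f g : α → ℝ}
    (hf : MemLp f 2 μ) (hg : MemLp g 2 μ) : Integrable (fun x => f x * g x) μ := by
  have h1 : MemLp (g • f) 1 μ := haveI : ENNReal.HolderTriple 2 2 1 := ⟨by simp [one_div, ENNReal.inv_two_add_inv_two]⟩
    hf.smul hg
  have h2 := memLp_one_iff_integrable.mp h1
  have h3 : (fun x => f x * g x) = g • f := by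
    funext x; simp [mul_comm]
  rw [h3]
  exact h2

theorem mp_int {α β : Type*} [MeasurableSpace α] [MeasurableSpace β]
    {μ : Measure α} {μ' : Measure β} {φ : α → β} (hφ : MeasurePreserving φ μ μ')
    {f : β → ℝ} (hf : AEStronglyMeasurable f μ') :
    ∫ x, f (φ x) ∂μ = ∫ y, f y ∂μ' := by
  rw [← hφ.map_eq]
  exact (integral_map hφ.measurable.aemeasurable (hφ.map_eq.symm ▸ hf)).symm

variable {T : Type*} [MeasurableSpace T] (ν : Measure T) [IsProbabilityMeasure ν]

theorem pi_comp_mp {m k : ℕ} (ι : Fin m → Fin k) (hι : Function.Injective ι) :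
    MeasurePreserving (fun x : Fin k → T => x ∘ ι)
      (Measure.pi fun _ => ν) (Measure.pi fun _ : Fin m => ν) := by
  classical
  have hmeas : Measurable (fun x : Fin k → T => x ∘ ι) :=
    measurable_pi_lambda _ fun i => measurable_pi_apply (ι i)
  refine ⟨hmeas, ?_⟩
  refine (Measure.pi_eq (μ := fun _ : Fin m => ν) fun s hs => ?_).symm
  rw [Measure.map_apply hmeas (MeasurableSet.univ_pi hs)]
  set g : Fin k → Set T := fun c => if hc : ∃ i, ι i = c then s hc.choose else Set.univ with hg
  have hpre : (fun x : Fin k → T => x ∘ ι) ⁻¹' Set.univ.pi s = Set.univ.pi g := by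
    ext x
    simp only [Set.mem_preimage, Set.mem_univ_pi, Function.comp_apply, hg]
    constructor
    · intro H c
      by_cases hc : ∃ i, ι i = c
      · rw [dif_pos hc]
        obtain ⟨i0, hi0⟩ := hc
        have h4 : (⟨i0, hi0⟩ : ∃ i, ι i = c).choose = i0 :=
          hι ((⟨i0, hi0⟩ : ∃ i, ι i = c).choose_spec.trans hi0.symm)
        rw [h4, ← hi0]
        exact H i0
      · rw [dif_neg hc]; exact Set.mem_univ _
    · intro H i
      have hc : ∃ i', ι i' = ι i := ⟨i, rfl⟩
      have h3 := H (ι i)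
      rw [dif_pos hc] at h3
      have he : hc.choose = i := hι hc.choose_spec
      rwa [he] at h3
  rw [hpre, Measure.pi_pi]
  have h1 : ∀ c ∈ Finset.univ, c ∉ Finset.image ι Finset.univ → ν (g c) = 1 := by
    intro c _ hc
    have hnc : ¬∃ i, ι i = c := by simpa [Finset.mem_image] using hc
    simp [hg, hnc]
  rw [← Finset.prod_subset (Finset.subset_univ (Finset.image ι Finset.univ)) h1,
    Finset.prod_image (fun i _ j _ hij => hι hij)]
  refine Finset.prod_congr rfl fun i _ => ?_
  have hc : ∃ i', ι i' = ι i := ⟨i, rfl⟩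
  rw [hg]
  simp only
  rw [dif_pos hc, hι hc.choose_spec]

theorem mp2 : MeasurePreserving (fun y : Fin 2 → T => (y 0, y 1))
    (Measure.pi fun _ => ν) (ν.prod ν) := by
  have h := measurePreserving_piFinTwo (fun _ : Fin 2 => ν)
  have he : ⇑(MeasurableEquiv.piFinTwo fun _ : Fin 2 => T) = fun y : Fin 2 → T => (y 0, y 1) := by
    funext y; simp [MeasurableEquiv.piFinTwo_apply]
  rwa [he] at h

theorem mp3 : MeasurePreserving (fun y : Fin 3 → T => (y 0, y 1, y 2))
    (Measure.pi fun _ => ν) (ν.prod (ν.prod ν)) := by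
  have h1 := measurePreserving_piFinSuccAbove (fun _ : Fin 3 => ν) 0
  have h2 := (MeasurePreserving.id ν).prod (mp2 ν)
  have h3 := h2.comp h1
  have he : (Prod.map id fun y : Fin 2 → T => (y 0, y 1)) ∘
      ⇑(MeasurableEquiv.piFinSuccAbove (fun _ : Fin 3 => T) 0)
      = fun y : Fin 3 → T => (y 0, y 1, y 2) := by
    funext y
    simp only [Function.comp_apply, MeasurableEquiv.piFinSuccAbove_apply, Fin.removeNth,
      Prod.map, Fin.succAbove, Fin.tail]
    rfl
  rwa [he] at h3

theorem mp4 : MeasurePreserving (fun y : Fin 4 → T => ((y 0, y 1), (y 2, y 3)))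
    (Measure.pi fun _ => ν) ((ν.prod ν).prod (ν.prod ν)) := by
  have h1 := measurePreserving_piFinSuccAbove (fun _ : Fin 4 => ν) 0
  have h2 := (MeasurePreserving.id ν).prod (mp3 ν)
  have h3 := h2.comp h1
  have h4 := ((measurePreserving_prodAssoc ν ν (ν.prod ν)).symm
    (MeasurableEquiv.prodAssoc)).comp h3
  have he : ⇑(MeasurableEquiv.prodAssoc :
        (T × T) × (T × T) ≃ᵐ T × T × T × T).symm ∘
      ((Prod.map id fun y : Fin 3 → T => (y 0, y 1, y 2)) ∘
        ⇑(MeasurableEquiv.piFinSuccAbove (fun _ : Fin 4 => T) 0))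
      = fun y : Fin 4 → T => ((y 0, y 1), (y 2, y 3)) := by
    funext y
    simp only [Function.comp_apply, MeasurableEquiv.piFinSuccAbove_apply, Fin.removeNth,
      Prod.map, Fin.succAbove, Fin.tail, MeasurableEquiv.prodAssoc, Equiv.prodAssoc,
      MeasurableEquiv.symm_mk, MeasurableEquiv.coe_mk, Equiv.coe_fn_symm_mk]
    rfl
  rwa [he] at h4

theorem mp_pair {i j : Fin N} (hij : i ≠ j) :
    MeasurePreserving (fun x : Fin N → T => (x i, x j))
      (Measure.pi fun _ => ν) (ν.prod ν) := by
  have h := (mp2 ν).comp (pi_comp_mp ν ![i, j] (by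
    intro a b hab; fin_cases a <;> fin_cases b <;> simp_all))
  have he : ((fun y : Fin 2 → T => (y 0, y 1)) ∘ fun x : Fin N → T => x ∘ ![i, j])
      = fun x : Fin N → T => (x i, x j) := by
    funext x; simp
  rwa [he] at h

theorem mp_triple {i j k : Fin N} (hij : i ≠ j) (hik : i ≠ k) (hjk : j ≠ k) :
    MeasurePreserving (fun x : Fin N → T => (x i, x j, x k))
      (Measure.pi fun _ => ν) (ν.prod (ν.prod ν)) := by
  have h := (mp3 ν).comp (pi_comp_mp ν ![i, j, k] (by
    intro a b hab; fin_cases a <;> fin_cases b <;> simp_all))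
  have he : ((fun y : Fin 3 → T => (y 0, y 1, y 2)) ∘ fun x : Fin N → T => x ∘ ![i, j, k])
      = fun x : Fin N → T => (x i, x j, x k) := by
    funext x; simp
  rwa [he] at h

theorem mp_quad {i j k l : Fin N} (hij : i ≠ j) (hik : i ≠ k) (hil : i ≠ l)
    (hjk : j ≠ k) (hjl : j ≠ l) (hkl : k ≠ l) :
    MeasurePreserving (fun x : Fin N → T => ((x i, x j), (x k, x l)))
      (Measure.pi fun _ => ν) ((ν.prod ν).prod (ν.prod ν)) := by
  have h := (mp4 ν).comp (pi_comp_mp ν ![i, j, k, l] (by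
    intro a b hab; fin_cases a <;> fin_cases b <;> simp_all))
  have he : ((fun y : Fin 4 → T => ((y 0, y 1), (y 2, y 3))) ∘
        fun x : Fin N → T => x ∘ ![i, j, k, l])
      = fun x : Fin N → T => ((x i, x j), (x k, x l)) := by
    funext x; simp
  rwa [he] at h

end UStatVarAux

/-- Exact variance formula for a second-order U-statistic (equation `eq:exact.var`,
Appendix G.3 of the paper): for `h` square-integrable w.r.t. `ν ⊗ ν` and
`U := (n(n-1))⁻¹ ∑_{i≠j} h(Oᵢ, Oⱼ)` over `n ≥ 4` i.i.d. copies,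
`Var[U] = (n(n-1))⁻¹ E[h₁₂² + h₁₂h₂₁] + ((n-2)/(n(n-1))) E[h₁₂h₁₃ + h₁₂h₃₁ + h₁₂h₂₃ + h₁₂h₃₂]
  + ((n-2)(n-3)/(n(n-1)) - 1) (E[h₁₂])²`. -/
theorem stmt9 {T : Type*} [MeasurableSpace T] (ν : Measure T) [IsProbabilityMeasure ν]
    (h : T → T → ℝ) (hmeas : Measurable (Function.uncurry h))
    (hL2 : Integrable (fun q : T × T => (h q.1 q.2) ^ 2) (ν.prod ν))
    (n : ℕ) (hn : 4 ≤ n)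
    (U : (Fin n → T) → ℝ)
    (hU : U = fun x => ((n : ℝ) * ((n : ℝ) - 1))⁻¹ *
        ∑ i : Fin n, ∑ j : Fin n, (if i = j then 0 else h (x i) (x j))) :
    variance U (Measure.pi fun _ : Fin n => ν)
      = ((n : ℝ) * ((n : ℝ) - 1))⁻¹ *
          (∫ q : T × T, ((h q.1 q.2) ^ 2 + h q.1 q.2 * h q.2 q.1) ∂(ν.prod ν))
        + (((n : ℝ) - 2) / ((n : ℝ) * ((n : ℝ) - 1))) *
            (∫ q : T × T × T,
                (h q.1 q.2.1 * h q.1 q.2.2 + h q.1 q.2.1 * h q.2.2 q.1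
                  + h q.1 q.2.1 * h q.2.1 q.2.2 + h q.1 q.2.1 * h q.2.2 q.2.1)
              ∂(ν.prod (ν.prod ν)))
        + (((n : ℝ) - 2) * ((n : ℝ) - 3) / ((n : ℝ) * ((n : ℝ) - 1)) - 1) *
            (∫ q : T × T, h q.1 q.2 ∂(ν.prod ν)) ^ 2 := by
  classical
  open UStatVarAux in
  have hn4 : (4 : ℝ) ≤ (n : ℝ) := by exact_mod_cast hn
  have hn0 : (n : ℝ) ≠ 0 := by linarith
  have hn1 : (n : ℝ) - 1 ≠ 0 := by linarith
  set P : Measure (Fin n → T) := Measure.pi fun _ : Fin n => ν with hP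
  set c : ℝ := ((n : ℝ) * ((n : ℝ) - 1))⁻¹ with hc
  set M : ℝ := ∫ q : T × T, h q.1 q.2 ∂(ν.prod ν) with hM
  set A : ℝ := ∫ q : T × T, h q.1 q.2 * h q.1 q.2 ∂(ν.prod ν) with hA
  set B : ℝ := ∫ q : T × T, h q.1 q.2 * h q.2 q.1 ∂(ν.prod ν) with hB
  set C1 : ℝ := ∫ q : T × T × T, h q.1 q.2.1 * h q.1 q.2.2 ∂(ν.prod (ν.prod ν)) with hC1
  set C2 : ℝ := ∫ q : T × T × T, h q.1 q.2.1 * h q.2.2 q.1 ∂(ν.prod (ν.prod ν)) with hC2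
  set C3 : ℝ := ∫ q : T × T × T, h q.1 q.2.1 * h q.2.1 q.2.2 ∂(ν.prod (ν.prod ν)) with hC3
  set C4 : ℝ := ∫ q : T × T × T, h q.1 q.2.1 * h q.2.2 q.2.1 ∂(ν.prod (ν.prod ν)) with hC4
  -- measurability
  have Hm : Measurable fun q : T × T => h q.1 q.2 := hmeas
  have Hswap : Measurable fun q : T × T => h q.2 q.1 := Hm.comp measurable_swap
  have Hab : Measurable fun q : T × T × T => h q.1 q.2.1 :=
    hmeas.comp (measurable_fst.prodMk measurable_snd.fst)
  have Hac : Measurable fun q : T × T × T => h q.1 q.2.2 :=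
    hmeas.comp (measurable_fst.prodMk measurable_snd.snd)
  have Hca : Measurable fun q : T × T × T => h q.2.2 q.1 :=
    hmeas.comp (measurable_snd.snd.prodMk measurable_fst)
  have Hbc : Measurable fun q : T × T × T => h q.2.1 q.2.2 :=
    hmeas.comp (measurable_snd.fst.prodMk measurable_snd.snd)
  have Hcb : Measurable fun q : T × T × T => h q.2.2 q.2.1 :=
    hmeas.comp (measurable_snd.snd.prodMk measurable_snd.fst)
  -- square-integrability on the product spaces
  have hM2 : MemLp (fun q : T × T => h q.1 q.2) 2 (ν.prod ν) :=
    (memLp_two_iff_integrable_sq Hm.aestronglyMeasurable).mpr hL2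
  have hM2s : MemLp (fun q : T × T => h q.2 q.1) 2 (ν.prod ν) :=
    hM2.comp_measurePreserving Measure.measurePreserving_swap
  have mpfst : MeasurePreserving (Prod.fst : T × T → T) (ν.prod ν) ν :=
    ⟨measurable_fst, Measure.fst_prod⟩
  have mpsnd : MeasurePreserving (Prod.snd : T × T → T) (ν.prod ν) ν :=
    ⟨measurable_snd, Measure.snd_prod⟩
  have mpsnd3 : MeasurePreserving (Prod.snd : T × (T × T) → T × T)
      (ν.prod (ν.prod ν)) (ν.prod ν) :=
    ⟨measurable_snd, Measure.snd_prod⟩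
  have P_ab : MeasurePreserving (fun q : T × T × T => (q.1, q.2.1))
      (ν.prod (ν.prod ν)) (ν.prod ν) := (MeasurePreserving.id ν).prod mpfst
  have P_ac : MeasurePreserving (fun q : T × T × T => (q.1, q.2.2))
      (ν.prod (ν.prod ν)) (ν.prod ν) := (MeasurePreserving.id ν).prod mpsnd
  have P_ca : MeasurePreserving (fun q : T × T × T => (q.2.2, q.1))
      (ν.prod (ν.prod ν)) (ν.prod ν) := Measure.measurePreserving_swap.comp P_ac
  have P_bc : MeasurePreserving (fun q : T × T × T => q.2)
      (ν.prod (ν.prod ν)) (ν.prod ν) := mpsnd3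
  have P_cb : MeasurePreserving (fun q : T × T × T => (q.2.2, q.2.1))
      (ν.prod (ν.prod ν)) (ν.prod ν) := Measure.measurePreserving_swap.comp mpsnd3
  have m_ab : MemLp (fun q : T × T × T => h q.1 q.2.1) 2 (ν.prod (ν.prod ν)) :=
    hM2.comp_measurePreserving P_ab
  have m_ac : MemLp (fun q : T × T × T => h q.1 q.2.2) 2 (ν.prod (ν.prod ν)) :=
    hM2.comp_measurePreserving P_ac
  have m_ca : MemLp (fun q : T × T × T => h q.2.2 q.1) 2 (ν.prod (ν.prod ν)) :=
    hM2.comp_measurePreserving P_ca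
  have m_bc : MemLp (fun q : T × T × T => h q.2.1 q.2.2) 2 (ν.prod (ν.prod ν)) :=
    hM2.comp_measurePreserving P_bc
  have m_cb : MemLp (fun q : T × T × T => h q.2.2 q.2.1) 2 (ν.prod (ν.prod ν)) :=
    hM2.comp_measurePreserving P_cb
  have I1 : Integrable (fun q : T × T × T => h q.1 q.2.1 * h q.1 q.2.2)
      (ν.prod (ν.prod ν)) := L2mul m_ab m_ac
  have I2 : Integrable (fun q : T × T × T => h q.1 q.2.1 * h q.2.2 q.1)
      (ν.prod (ν.prod ν)) := L2mul m_ab m_ca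
  have I3 : Integrable (fun q : T × T × T => h q.1 q.2.1 * h q.2.1 q.2.2)
      (ν.prod (ν.prod ν)) := L2mul m_ab m_bc
  have I4 : Integrable (fun q : T × T × T => h q.1 q.2.1 * h q.2.2 q.2.1)
      (ν.prod (ν.prod ν)) := L2mul m_ab m_cb
  have IA : Integrable (fun q : T × T => h q.1 q.2 * h q.1 q.2) (ν.prod ν) := L2mul hM2 hM2
  have IB : Integrable (fun q : T × T => h q.1 q.2 * h q.2 q.1) (ν.prod ν) := L2mul hM2 hM2s
  -- the two non-trivial integrals in the statement
  have hAB : ∫ q : T × T, ((h q.1 q.2) ^ 2 + h q.1 q.2 * h q.2 q.1) ∂(ν.prod ν) = A + B := by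
    have : (fun q : T × T => (h q.1 q.2) ^ 2 + h q.1 q.2 * h q.2 q.1)
        = fun q : T × T => h q.1 q.2 * h q.1 q.2 + h q.1 q.2 * h q.2 q.1 := by
      funext q; ring
    rw [this, integral_add IA IB]
  have hCsum : ∫ q : T × T × T,
      (h q.1 q.2.1 * h q.1 q.2.2 + h q.1 q.2.1 * h q.2.2 q.1
        + h q.1 q.2.1 * h q.2.1 q.2.2 + h q.1 q.2.1 * h q.2.2 q.2.1) ∂(ν.prod (ν.prod ν))
      = C1 + C2 + C3 + C4 := by
    have J12 : Integrable (fun q : T × T × T =>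
        h q.1 q.2.1 * h q.1 q.2.2 + h q.1 q.2.1 * h q.2.2 q.1) (ν.prod (ν.prod ν)) := I1.add I2
    have J123 : Integrable (fun q : T × T × T =>
        h q.1 q.2.1 * h q.1 q.2.2 + h q.1 q.2.1 * h q.2.2 q.1
          + h q.1 q.2.1 * h q.2.1 q.2.2) (ν.prod (ν.prod ν)) := J12.add I3
    rw [integral_add J123 I4, integral_add J12 I3, integral_add I1 I2]
  -- L² bounds over the big product space
  have memH : ∀ i j : Fin n, i ≠ j → MemLp (fun x : Fin n → T => h (x i) (x j)) 2 P :=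
    fun i j hij => hM2.comp_measurePreserving (mp_pair ν hij)
  have memG : ∀ i j : Fin n,
      MemLp (fun x : Fin n → T => if i = j then (0:ℝ) else h (x i) (x j)) 2 P := by
    intro i j
    by_cases hij : i = j
    · simp only [if_pos hij]
      exact memLp_const 0
    · simp only [if_neg hij]
      exact memH i j hij
  have intGG : ∀ i j k l : Fin n, Integrable (fun x : Fin n → T =>
      (if i = j then (0:ℝ) else h (x i) (x j)) * (if k = l then (0:ℝ) else h (x k) (x l))) P :=
    fun i j k l => L2mul (memG i j) (memG k l)
  -- single-term integral
  have intG : ∀ i j : Fin n, ∫ x, (if i = j then (0:ℝ) else h (x i) (x j)) ∂P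
      = (if i = j then 0 else M) := by
    intro i j
    by_cases hij : i = j
    · simp [hij]
    · simp only [if_neg hij]
      exact mp_int (mp_pair ν hij) Hm.aestronglyMeasurable
  -- the key pointwise classification
  have key : ∀ i j k l : Fin n, ∫ x, ((if i = j then (0:ℝ) else h (x i) (x j))
        * (if k = l then (0:ℝ) else h (x k) (x l))) ∂P
      = W i j * (W k l * ((M * M) + (C1 - M * M) * D i k + (C2 - M * M) * D i l
          + (C3 - M * M) * D j k + (C4 - M * M) * D j l
          + (A - C1 - C4 + M * M) * (D i k * D j l)
          + (B - C2 - C3 + M * M) * (D i l * D j k))) := by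
    intro i j k l
    by_cases hij : i = j
    · simp [W, hij]
    by_cases hkl : k = l
    · simp [W, hkl]
    simp only [if_neg hij, if_neg hkl]
    by_cases hik : i = k
    · subst hik
      by_cases hjl : j = l
      · subst hjl
        trans A
        · exact mp_int (mp_pair ν hij) (Hm.mul Hm).aestronglyMeasurable
        · simp [W, D, hij, Ne.symm hij]
          all_goals ring
      · trans C1
        · exact mp_int (mp_triple ν hij hkl hjl)
            (Hab.mul Hac).aestronglyMeasurable
        · simp [W, D, hij, hkl, hjl, Ne.symm hij, Ne.symm hkl, Ne.symm hjl]
    by_cases hil : i = l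
    · subst hil
      by_cases hjk : j = k
      · subst hjk
        trans B
        · exact mp_int (mp_pair ν hij) (Hm.mul Hswap).aestronglyMeasurable
        · simp [W, D, hij, Ne.symm hij]
          all_goals ring
      · trans C2
        · exact mp_int (mp_triple ν hij (fun hh : i = k => hik hh) hjk)
            (Hab.mul Hca).aestronglyMeasurable
        · simp [W, D, hij, hik, hjk, hkl, Ne.symm hij, Ne.symm hjk]
          all_goals ring
    by_cases hjk : j = k
    · subst hjk
      trans C3
      · exact mp_int (mp_triple ν hij hil hkl)
          (Hab.mul Hbc).aestronglyMeasurable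
      · simp [W, D, hij, hil, hkl, Ne.symm hij, Ne.symm hil, Ne.symm hkl]
        all_goals ring
    by_cases hjl : j = l
    · subst hjl
      trans C4
      · exact mp_int (mp_triple ν hij hik hjk)
          (Hab.mul Hcb).aestronglyMeasurable
      · simp [W, D, hij, hik, hjk, Ne.symm hij, Ne.symm hik, Ne.symm hjk]
        all_goals ring
    · trans (M * M)
      · exact (mp_int (mp_quad ν hij hik hil hjk hjl hkl)
            (((hmeas.comp (measurable_fst.fst.prodMk measurable_fst.snd)).mul
              (hmeas.comp (measurable_snd.fst.prodMk measurable_snd.snd)))).aestronglyMeasurable).trans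
          (integral_prod_mul (fun p : T × T => h p.1 p.2) (fun p : T × T => h p.1 p.2))
      · simp [W, D, hij, hik, hil, hjk, hjl, hkl, Ne.symm hij, Ne.symm hik, Ne.symm hil,
          Ne.symm hjk, Ne.symm hjl, Ne.symm hkl]
        all_goals ring
  -- membership of U in L²
  have hUm : MemLp U 2 P := by
    rw [hU]
    exact (memLp_finset_sum Finset.univ fun i _ =>
      memLp_finset_sum Finset.univ fun j _ => memG i j).const_mul c
  -- first moment
  have hEU : ∫ x, U x ∂P = c * ((n : ℝ) * (((n : ℝ) - 1) * M)) := by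
    simp only [hU]
    rw [integral_const_mul,
      integral_finset_sum _ (fun i _ => integrable_finset_sum _ fun j _ =>
        (memG i j).integrable one_le_two),
      Finset.sum_congr rfl fun i _ => integral_finset_sum _ (fun j _ =>
        (memG i j).integrable one_le_two),
      Finset.sum_congr rfl fun i _ => Finset.sum_congr rfl fun j _ => intG i j,
      Finset.sum_congr rfl fun i _ => sum_ite_zero i M,
      Finset.sum_const, Finset.card_univ, Fintype.card_fin, nsmul_eq_mul]
  -- second moment
  have hF2 : ∀ x : Fin n → T,
      (∑ i : Fin n, ∑ j : Fin n, (if i = j then (0:ℝ) else h (x i) (x j)))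
        * (∑ i : Fin n, ∑ j : Fin n, (if i = j then (0:ℝ) else h (x i) (x j)))
      = ∑ i : Fin n, ∑ j : Fin n, ∑ k : Fin n, ∑ l : Fin n,
          ((if i = j then (0:ℝ) else h (x i) (x j)) * (if k = l then (0:ℝ) else h (x k) (x l))) := by
    intro x
    rw [Finset.sum_mul_sum]
    refine Finset.sum_congr rfl fun i _ => ?_
    rw [Finset.sum_congr rfl fun k _ => Finset.sum_mul_sum _ _ _ _, Finset.sum_comm]
  have hUsq : (U ^ 2 : (Fin n → T) → ℝ) = fun x => c ^ 2 *
      ∑ i : Fin n, ∑ j : Fin n, ∑ k : Fin n, ∑ l : Fin n,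
        ((if i = j then (0:ℝ) else h (x i) (x j)) * (if k = l then (0:ℝ) else h (x k) (x l))) := by
    funext x
    simp only [Pi.pow_apply, hU]
    have hcs : ∀ s : ℝ, (c * s) ^ 2 = c ^ 2 * (s * s) := fun s => by ring
    rw [hcs, hF2 x]
  have hEU2 : ∫ x, (U ^ 2 : (Fin n → T) → ℝ) x ∂P
      = c ^ 2 * ((n : ℝ) * (((n : ℝ) - 1) *
        ((n : ℝ) * (((n : ℝ) - 1) * (M * M)) + ((n : ℝ) - 1) * (C1 - M * M)
          + ((n : ℝ) - 1) * (C2 - M * M) + ((n : ℝ) - 1) * (C3 - M * M)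
          + ((n : ℝ) - 1) * (C4 - M * M)
          + (A - C1 - C4 + M * M) + (B - C2 - C3 + M * M)))) := by
    simp only [hUsq]
    rw [integral_const_mul,
      integral_finset_sum _ (fun i _ => integrable_finset_sum _ fun j _ =>
        integrable_finset_sum _ fun k _ => integrable_finset_sum _ fun l _ => intGG i j k l),
      Finset.sum_congr rfl fun i _ =>
        integral_finset_sum _ (fun j _ => integrable_finset_sum _ fun k _ =>
          integrable_finset_sum _ fun l _ => intGG i j k l),
      Finset.sum_congr rfl fun i _ => Finset.sum_congr rfl fun j _ =>
        integral_finset_sum _ (fun k _ => integrable_finset_sum _ fun l _ => intGG i j k l),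
      Finset.sum_congr rfl fun i _ => Finset.sum_congr rfl fun j _ =>
        Finset.sum_congr rfl fun k _ =>
          integral_finset_sum _ (fun l _ => intGG i j k l),
      Finset.sum_congr rfl fun i _ => Finset.sum_congr rfl fun j _ =>
        Finset.sum_congr rfl fun k _ => Finset.sum_congr rfl fun l _ => key i j k l,
      quad_eval]
  -- put everything together
  rw [variance_eq_sub hUm]
  have hint1 : (∫ x, (U ^ 2 : (Fin n → T) → ℝ) x ∂P) - (∫ x, U x ∂P) ^ 2
      = c * (A + B) + (((n : ℝ) - 2) / ((n : ℝ) * ((n : ℝ) - 1))) * (C1 + C2 + C3 + C4)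
        + (((n : ℝ) - 2) * ((n : ℝ) - 3) / ((n : ℝ) * ((n : ℝ) - 1)) - 1) * M ^ 2 := by
    rw [hEU2, hEU, hc]
    field_simp
    ring
  calc P[U ^ 2] - P[U] ^ 2
      = c * (A + B) + (((n : ℝ) - 2) / ((n : ℝ) * ((n : ℝ) - 1))) * (C1 + C2 + C3 + C4)
        + (((n : ℝ) - 2) * ((n : ℝ) - 3) / ((n : ℝ) * ((n : ℝ) - 1)) - 1) * M ^ 2 := hint1
    _ = _ := by rw [← hAB, ← hCsum]
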